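/- If n ∈ O_FS, then every positive divisor of n also belongs to O_FS. -/

import Mathlib

/-- `O_FS` : odd naturals `n ≥ 1` such that `(ℤ/nℤ)*` is covered by `{±2^j : j ≥ 0}`. -/
def OFS (n : ℕ) : Prop :=
  Odd n ∧ 1 ≤ n ∧ ∀ x : ℤ, IsCoprime x (n : ℤ) →
    ∃ j : ℕ, (n : ℤ) ∣ x - 2 ^ j ∨ (n : ℤ) ∣ x + 2 ^ j

/-- `O_FS` is stable under taking positive divisors. -/
theorem OFS_of_dvd (n : ℕ) (hn : OFS n) : ∀ d : ℕ, 0 < d → d ∣ n → OFS d := by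
  obtain ⟨hodd, hn1, hcov⟩ := hn
  intro d hd hdvd
  have hnne : NeZero n := ⟨by omega⟩
  refine ⟨?_, hd, ?_⟩
  · rcases Nat.even_or_odd d with he | ho
    · exact absurd hodd (by
        rw [← Nat.not_even_iff_odd]
        exact fun h => h ((even_iff_two_dvd).mpr ((even_iff_two_dvd.mp he).trans hdvd)))
    · exact ho
  · intro x hx
    -- x is a unit mod d
    have hux : IsUnit ((x : ZMod d)) := by
      obtain ⟨a, b, hab⟩ := hx
      refine IsUnit.of_mul_eq_one ((a : ZMod d)) ?_
      have := congrArg (fun z : ℤ => (z : ZMod d)) hab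
      push_cast at this
      simpa [mul_comm] using this
    obtain ⟨v, hv⟩ := ZMod.unitsMap_surjective hdvd hux.unit
    -- lift to an integer coprime to n
    set y : ℤ := ((v : ZMod n).val : ℤ) with hy
    have hycop : IsCoprime y (n : ℤ) := by
      rw [Int.isCoprime_iff_gcd_eq_one]
      simp only [hy, Int.gcd, Int.natAbs_natCast, Int.natAbs_natCast]
      exact ZMod.val_coe_unit_coprime v
    obtain ⟨j, hj⟩ := hcov y hycop
    refine ⟨j, ?_⟩
    -- d ∣ x - y
    have hxy : (d : ℤ) ∣ x - y := by
      have h1 : ((y : ZMod d)) = (x : ZMod d) := by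
        have h2 : ZMod.castHom hdvd (ZMod d) (v : ZMod n) = (x : ZMod d) := by
          have := congrArg (fun u : (ZMod d)ˣ => (u : ZMod d)) hv
          simpa [ZMod.unitsMap, IsUnit.unit_spec] using this
        have : ((((v : ZMod n).val : ℕ) : ZMod d)) = (x : ZMod d) := by
          rw [ZMod.natCast_val]
          exact h2
        simpa [hy] using this
      have := (ZMod.intCast_eq_intCast_iff' _ _ _).mp h1.symm
      exact Int.ModEq.dvd this.symm
    have hdn : (d : ℤ) ∣ (n : ℤ) := Int.natCast_dvd_natCast.mpr hdvd
    rcases hj with hj | hj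
    · left
      have h3 : (d : ℤ) ∣ y - 2 ^ j := hdn.trans hj
      have heq : x - 2 ^ j = (x - y) + (y - 2 ^ j) := by ring
      rw [heq]; exact dvd_add hxy h3
    · right
      have h3 : (d : ℤ) ∣ y + 2 ^ j := hdn.trans hj
      have heq : x + 2 ^ j = (x - y) + (y + 2 ^ j) := by ring
      rw [heq]; exact dvd_add hxy h3
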